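/- If (i_k)_{k≥0} is an almost-geodesic with respect to π, then the sequence (K_{·i_k})_{k≥0} converges in the product topology of (ℝ ∪ {−∞})^S to some element w of the minimal Martin space ℳᵐ. -/

import Mathlib

open Filter Topology

noncomputable section

namespace MaxPlus

variable {S : Type*}

/-- Weight of the path `p 0, p 1, ..., p n` for the kernel `A`. -/
def pathWeight (A : S → S → EReal) (p : ℕ → S) (n : ℕ) : EReal :=
  ∑ k ∈ Finset.range n, A (p k) (p (k + 1))

/-- The max-plus star kernel `A*`: supremum of weights of paths of length `≥ 0`. -/
def star (A : S → S → EReal) (i j : S) : EReal :=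
  ⨆ (n : ℕ) (p : ℕ → S) (_ : p 0 = i ∧ p n = j), pathWeight A p n

/-- The max-plus kernel `A⁺`: supremum of weights of paths of length `≥ 1`. -/
def plus (A : S → S → EReal) (i j : S) : EReal :=
  ⨆ (n : ℕ) (_ : 1 ≤ n) (p : ℕ → S) (_ : p 0 = i ∧ p n = j), pathWeight A p n

/-- `π` is a left super-harmonic row vector (with full support, being real valued). -/
def LeftSuperharmonic (A : S → S → EReal) (π : S → ℝ) : Prop :=
  ∀ j, (⨆ i, ((π i : EReal) + A i j)) ≤ (π j : EReal)

/-- The Martin kernel `K_{ij} = A*_{ij} - π_j`. -/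
def K (A : S → S → EReal) (π : S → ℝ) (i j : S) : EReal :=
  star A i j - (π j : EReal)

/-- `K♭_{ij} = A⁺_{ij} - π_j`. -/
def Kflat (A : S → S → EReal) (π : S → ℝ) (i j : S) : EReal :=
  plus A i j - (π j : EReal)

/-- The set `𝒦` of columns of the Martin kernel. -/
def kerCols (A : S → S → EReal) (π : S → ℝ) : Set (S → EReal) :=
  Set.range fun j => fun i => K A π i j

/-- The Martin space `ℳ`: closure of `𝒦` in the product topology. -/
def martin (A : S → S → EReal) (π : S → ℝ) : Set (S → EReal) :=
  closure (kerCols A π)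

/-- `μ_u(w)`: the limsup of `π_j + u_j` as `K_{·j} → w`. -/
def mu (A : S → S → EReal) (π : S → ℝ) (u : S → EReal) (w : S → EReal) : EReal :=
  ⨅ (W : Set (S → EReal)) (_ : W ∈ 𝓝 w),
    ⨆ (j : S) (_ : (fun i => K A π i j) ∈ W), ((π j : EReal) + u j)

/-- `w♭_i`: the liminf of `K♭_{ij}` as `K_{·j} → w`. -/
def flat (A : S → S → EReal) (π : S → ℝ) (w : S → EReal) (i : S) : EReal :=
  ⨆ (W : Set (S → EReal)) (_ : W ∈ 𝓝 w),
    ⨅ (j : S) (_ : (fun i' => K A π i' j) ∈ W), Kflat A π i j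

/-- The kernel `H(z,w) = μ_w(z)`. -/
def H (A : S → S → EReal) (π : S → ℝ) (z w : S → EReal) : EReal := mu A π w z

/-- The kernel `H♭(z,w) = μ_{w♭}(z)`. -/
def Hflat (A : S → S → EReal) (π : S → ℝ) (z w : S → EReal) : EReal :=
  mu A π (flat A π w) z

/-- The minimal Martin space `ℳᵐ = {w ∈ ℳ : H♭(w,w) = 0}`. -/
def martinMin (A : S → S → EReal) (π : S → ℝ) : Set (S → EReal) :=
  {w | w ∈ martin A π ∧ Hflat A π w w = 0}

/-- The maximal circuit mean `ρ(A)`. -/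
def maxCircuitMean (A : S → S → EReal) : EReal :=
  ⨆ (k : ℕ) (_ : 1 ≤ k) (p : ℕ → S) (_ : p k = p 0),
    (((k : ℝ)⁻¹ : ℝ) : EReal) * pathWeight A p k

/-- `α`-almost-geodesic with respect to the left super-harmonic vector `π`. -/
def IsAlmostGeodesic (A : S → S → EReal) (π : S → ℝ) (x : ℕ → S) : Prop :=
  ∃ α : ℝ, 0 ≤ α ∧ ∀ k : ℕ,
    (π (x k) : EReal) ≤ (α : EReal) + (π (x 0) : EReal) + pathWeight A x k

/-- The set `𝒮` of `π`-integrable super-harmonic vectors. -/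
def Sset (A : S → S → EReal) (π : S → ℝ) : Set (S → EReal) :=
  {u | (∀ i, u i ≠ ⊤) ∧ (∀ i, (⨆ j, A i j + u j) ≤ u i) ∧
    (⨆ j, ((π j : EReal) + u j)) < ⊤}

/-- The set `ℋ` of `π`-integrable harmonic vectors. -/
def Hset (A : S → S → EReal) (π : S → ℝ) : Set (S → EReal) :=
  {u | (∀ i, u i ≠ ⊤) ∧ (∀ i, (⨆ j, A i j + u j) = u i) ∧
    (⨆ j, ((π j : EReal) + u j)) < ⊤}

/-- A vector is normalised if `sup_j (π_j + u_j) = 0`. -/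
def Normalised (π : S → ℝ) (u : S → EReal) : Prop :=
  (⨆ j, ((π j : EReal) + u j)) = 0

/-- `ξ` is an extremal generator of `V`. -/
def ExtremalGen (V : Set (S → EReal)) (ξ : S → EReal) : Prop :=
  ξ ∈ V ∧ ξ ≠ (fun _ => (⊥ : EReal)) ∧
    ∀ u v, u ∈ V → v ∈ V → ξ = (fun i => u i ⊔ v i) → ξ = u ∨ ξ = v

end MaxPlus
namespace MaxPlus

section Auxiliary

variable {S : Type*} {A : S → S → EReal} {π : S → ℝ}

lemma pathWeight_zero (A : S → S → EReal) (p : ℕ → S) : pathWeight A p 0 = 0 :=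
  Finset.sum_range_zero _

lemma pathWeight_succ (A : S → S → EReal) (p : ℕ → S) (n : ℕ) :
    pathWeight A p (n + 1) = pathWeight A p n + A (p n) (p (n + 1)) :=
  Finset.sum_range_succ _ _

lemma pathWeight_le_star (A : S → S → EReal) {p : ℕ → S} {n : ℕ} {i j : S}
    (h0 : p 0 = i) (hn : p n = j) : pathWeight A p n ≤ star A i j := by
  subst h0; subst hn
  exact le_iSup_of_le n (le_iSup_of_le p (le_iSup_of_le ⟨rfl, rfl⟩ le_rfl))

lemma pathWeight_le_plus (A : S → S → EReal) {p : ℕ → S} {n : ℕ} {i j : S}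
    (hn1 : 1 ≤ n) (h0 : p 0 = i) (hn : p n = j) : pathWeight A p n ≤ plus A i j := by
  subst h0; subst hn
  exact le_iSup_of_le n (le_iSup_of_le hn1 (le_iSup_of_le p (le_iSup_of_le ⟨rfl, rfl⟩ le_rfl)))

lemma exists_path_of_lt_star {c : EReal} {i j : S} (h : c < star A i j) :
    ∃ n p, p 0 = i ∧ p n = j ∧ c < pathWeight A p n := by
  simp only [star, lt_iSup_iff] at h
  obtain ⟨n, p, ⟨h0, hn⟩, hc⟩ := h
  exact ⟨n, p, h0, hn, hc⟩

lemma exists_concat (A : S → S → EReal) (p q : ℕ → S) (n m : ℕ) (hpq : p n = q 0) :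
    ∃ r : ℕ → S, r 0 = p 0 ∧ r (n + m) = q m ∧
      pathWeight A r (n + m) = pathWeight A p n + pathWeight A q m := by
  set r : ℕ → S := fun t => if t < n then p t else q (t - n) with hr
  have hr1 : ∀ t, t < n → r t = p t := fun t ht => if_pos ht
  have hr2 : ∀ s : ℕ, r (n + s) = q s := by
    intro s
    show (if n + s < n then p (n + s) else q (n + s - n)) = q s
    rw [if_neg (by omega)]
    congr 1; omega
  have hr0 : r 0 = p 0 := by
    by_cases h : 0 < n
    · exact hr1 0 h
    · have hn0 : n = 0 := by omega
      subst hn0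
      show (if (0:ℕ) < 0 then p 0 else q (0 - 0)) = p 0
      simpa using hpq.symm
  have hterm : ∀ t, t < n → A (r t) (r (t + 1)) = A (p t) (p (t + 1)) := by
    intro t ht
    rw [hr1 t ht]
    by_cases h : t + 1 < n
    · rw [hr1 _ h]
    · have h1 : t + 1 = n := by omega
      have h2 : r (t + 1) = q 0 := by rw [h1]; exact hr2 0
      rw [h2, ← hpq, h1]
  refine ⟨r, hr0, hr2 m, ?_⟩
  induction m with
  | zero =>
    have hz : pathWeight A r (n + 0) = pathWeight A p n :=
      Finset.sum_congr rfl fun t ht => hterm t (Finset.mem_range.mp ht)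
    rw [hz, pathWeight_zero, add_zero]
  | succ s ih =>
    have e0 : pathWeight A r (n + (s + 1)) = pathWeight A r (n + s) + A (r (n + s)) (r (n + s + 1)) :=
      pathWeight_succ A r (n + s)
    have e1 : r (n + s) = q s := hr2 s
    have e2 : r (n + s + 1) = q (s + 1) := hr2 (s + 1)
    rw [e0, e1, e2, ih, pathWeight_succ, add_assoc]

lemma superharmonic_path (hπ : LeftSuperharmonic A π) (p : ℕ → S) (n : ℕ) :
    (π (p 0) : EReal) + pathWeight A p n ≤ (π (p n) : EReal) := by
  induction n with
  | zero => rw [pathWeight_zero, add_zero]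
  | succ s ih =>
    rw [pathWeight_succ, ← add_assoc]
    calc (π (p 0) : EReal) + pathWeight A p s + A (p s) (p (s + 1))
        ≤ (π (p s) : EReal) + A (p s) (p (s + 1)) := add_le_add_left ih _
      _ ≤ _ := le_trans (le_iSup (fun i => (π i : EReal) + A i (p (s + 1))) (p s)) (hπ (p (s + 1)))

lemma ereal_le_sub_of_add_le {r : ℝ} {y z : EReal} (h : (r : EReal) + y ≤ z) :
    y ≤ z - (r : EReal) := by
  have hy : y = ((-r : ℝ) : EReal) + ((r : EReal) + y) := by
    rw [← add_assoc, ← EReal.coe_add, neg_add_cancel, EReal.coe_zero, zero_add]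
  rw [hy, sub_eq_add_neg, ← EReal.coe_neg, add_comm z]
  exact add_le_add_right h _

lemma ereal_sub_le_sub_right {y z : EReal} (h : y ≤ z) (r : ℝ) :
    y - (r : EReal) ≤ z - (r : EReal) := by
  rw [sub_eq_add_neg, sub_eq_add_neg]
  exact add_le_add_left h _

lemma star_le_coe (hπ : LeftSuperharmonic A π) (i j : S) :
    star A i j ≤ ((π j - π i : ℝ) : EReal) := by
  refine iSup_le fun n => iSup_le fun p => iSup_le fun h => ?_
  obtain ⟨h0, hn⟩ := h
  have h1 := superharmonic_path hπ p n
  rw [h0, hn] at h1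
  have h2 := ereal_le_sub_of_add_le h1
  rwa [← EReal.coe_sub] at h2

lemma star_ne_top (hπ : LeftSuperharmonic A π) (i j : S) : star A i j ≠ ⊤ :=
  (lt_of_le_of_lt (star_le_coe hπ i j) (EReal.coe_lt_top _)).ne

lemma K_le_coe (hπ : LeftSuperharmonic A π) (i j : S) :
    K A π i j ≤ ((-π i : ℝ) : EReal) := by
  have h := ereal_sub_le_sub_right (star_le_coe hπ i j) (π j)
  have h2 : ((π j - π i : ℝ) : EReal) - ((π j : ℝ) : EReal) = ((-π i : ℝ) : EReal) := by
    rw [← EReal.coe_sub]; congr 1; ring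
  rw [h2] at h
  exact h

lemma plus_le_star (A : S → S → EReal) (i j : S) : plus A i j ≤ star A i j :=
  iSup_le fun _ => iSup_le fun _ => iSup_le fun p => iSup_le fun h =>
    pathWeight_le_star A h.1 h.2

lemma star_le_plus_of_ne {i j : S} (hij : i ≠ j) : star A i j ≤ plus A i j := by
  refine iSup_le fun n => iSup_le fun p => iSup_le fun h => ?_
  rcases Nat.eq_zero_or_pos n with h0 | h1
  · subst h0
    exact absurd (h.1.symm.trans h.2) hij
  · exact pathWeight_le_plus A h1 h.1 h.2

lemma kflat_le_K (i j : S) : Kflat A π i j ≤ K A π i j :=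
  ereal_sub_le_sub_right (plus_le_star A i j) (π j)

lemma ereal_coe_sub_lt_of_lt_add {u ε : ℝ} {y : EReal} (h : (u : EReal) < y + (ε : EReal)) :
    ((u - ε : ℝ) : EReal) < y := by
  induction y with
  | bot => rw [EReal.bot_add] at h; exact absurd h (by simp)
  | coe v =>
    rw [← EReal.coe_add] at h
    exact_mod_cast (by linarith [EReal.coe_lt_coe_iff.mp h] : u - ε < v)
  | top => exact EReal.coe_lt_top _

end Auxiliary



/-- if `(i_k)` is an almost-geodesic with respect to `π`, then the columns
`K_{·i_k}` converge in the product topology to some element of the minimal Martin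
space `ℳᵐ`. -/
theorem almostGeodesic_converges {S : Type*} (A : S → S → EReal)
    (hA : ∀ i j, A i j ≠ ⊤) (π : S → ℝ) (hπ : LeftSuperharmonic A π)
    (x : ℕ → S) (hx : IsAlmostGeodesic A π x) :
    ∃ w ∈ martinMin A π,
      Tendsto (fun k => fun i => K A π i (x k)) atTop (𝓝 w) := by
  classical
  obtain ⟨α, hα0, hgeo⟩ := hx
  have hstep : ∀ i j : S, (π i : EReal) + A i j ≤ (π j : EReal) := fun i j =>
    le_trans (le_iSup (fun i => (π i : EReal) + A i j) i) (hπ j)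
  have hKrw : ∀ i j, K A π i j = star A i j - (π j : EReal) := fun _ _ => rfl
  -- the arc weights along the almost-geodesic are real numbers
  have hWbot : ∀ m, pathWeight A x m ≠ ⊥ := by
    intro m hbot
    have h := hgeo m
    rw [hbot, EReal.add_bot] at h
    exact absurd (le_bot_iff.mp h) (EReal.coe_ne_bot _)
  set a : ℕ → ℝ := fun t => (A (x t) (x (t + 1))).toReal with ha
  have hAx : ∀ t, A (x t) (x (t + 1)) = ((a t : ℝ) : EReal) := by
    intro t
    have hb : A (x t) (x (t + 1)) ≠ ⊥ := by
      intro h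
      exact hWbot (t + 1) (by rw [pathWeight_succ, h, EReal.add_bot])
    exact (EReal.coe_toReal (hA _ _) hb).symm
  set Wb : ℕ → ℝ := fun m => ∑ t ∈ Finset.range m, a t with hWbdef
  have hWx : ∀ m, pathWeight A x m = ((Wb m : ℝ) : EReal) := by
    intro m
    induction m with
    | zero => simp [pathWeight_zero, hWbdef]
    | succ s ih =>
      rw [pathWeight_succ, ih, hAx s, ← EReal.coe_add]
      congr 1
      exact (Finset.sum_range_succ a s).symm
  -- weight of the geodesic segment from step k to step k+n
  have hseg : ∀ k n : ℕ,
      pathWeight A (fun t => x (k + t)) n = ((Wb (k + n) - Wb k : ℝ) : EReal) := by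
    intro k n
    induction n with
    | zero => simp [pathWeight_zero]
    | succ s ih =>
      have hps : pathWeight A (fun t => x (k + t)) (s + 1)
          = pathWeight A (fun t => x (k + t)) s + A (x (k + s)) (x (k + s + 1)) :=
        pathWeight_succ A _ s
      rw [hps, ih, hAx (k + s), ← EReal.coe_add]
      congr 1
      have hW1 : Wb (k + s + 1) = Wb (k + s) + a (k + s) := Finset.sum_range_succ a (k + s)
      rw [show k + (s + 1) = k + s + 1 by omega, hW1]
      ring
  -- the slack sequence σ
  set σ : ℕ → ℝ := fun m => Wb m - π (x m) with hσdef
  have hreal : ∀ m, π (x m) ≤ α + π (x 0) + Wb m := by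
    intro m
    have h := hgeo m
    rw [hWx m] at h
    exact_mod_cast h
  have hσanti : Antitone σ := by
    apply antitone_nat_of_succ_le
    intro m
    have h1 := hstep (x m) (x (m + 1))
    rw [hAx m, ← EReal.coe_add] at h1
    have h2 : π (x m) + a m ≤ π (x (m + 1)) := by exact_mod_cast h1
    have hW1 : Wb (m + 1) = Wb m + a m := Finset.sum_range_succ a m
    show Wb (m + 1) - π (x (m + 1)) ≤ Wb m - π (x m)
    rw [hW1]; linarith
  have hσbdd : ∀ m, -α - π (x 0) ≤ σ m := by
    intro m
    have := hreal m
    show -α - π (x 0) ≤ Wb m - π (x m)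
    linarith
  have hCauchy : ∀ ε : ℝ, 0 < ε → ∃ N, ∀ k m, N ≤ k → N ≤ m → σ k - σ m ≤ ε := by
    intro ε hε
    have hbdd : BddBelow (Set.range σ) := ⟨-α - π (x 0), by rintro _ ⟨m, rfl⟩; exact hσbdd m⟩
    have hLle : ∀ m, (⨅ n, σ n) ≤ σ m := fun m => ciInf_le hbdd m
    obtain ⟨N, hN⟩ : ∃ N, σ N < (⨅ n, σ n) + ε :=
      exists_lt_of_ciInf_lt (lt_add_of_pos_right _ hε)
    exact ⟨N, fun k m hk hm => by have h1 := hσanti hk; have h2 := hLle m; linarith⟩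
  -- the key monotonicity-up-to-ε estimate
  have hE : ∀ ε : ℝ, 0 < ε → ∃ N : ℕ, ∀ (i : S) (k m : ℕ), N ≤ k → k ≤ m →
      K A π i (x k) ≤ K A π i (x m) + (ε : EReal) := by
    intro ε hε
    obtain ⟨N, hN⟩ := hCauchy ε hε
    refine ⟨N, fun i k m hk hkm => ?_⟩
    by_cases hsb : star A i (x k) = ⊥
    · rw [hKrw, hsb, EReal.bot_sub]; exact bot_le
    · have hst : star A i (x k) ≠ ⊤ := star_ne_top hπ i (x k)
      have hse : star A i (x k) = ((star A i (x k)).toReal : EReal) :=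
        (EReal.coe_toReal hst hsb).symm
      set s : ℝ := (star A i (x k)).toReal with hs
      have key : ((s - π (x k) - ε : ℝ) : EReal) ≤ K A π i (x m) := by
        refine le_of_forall_lt_imp_le_of_dense fun c hc => ?_
        induction c with
        | bot => exact bot_le
        | top => exact absurd hc not_top_lt
        | coe u =>
          have hu : u < s - π (x k) - ε := EReal.coe_lt_coe_iff.mp hc
          have hlt : ((u + π (x k) + ε : ℝ) : EReal) < star A i (x k) := by
            rw [hse]
            exact_mod_cast (by linarith : u + π (x k) + ε < s)
          obtain ⟨n, p, hp0, hpn, hpw⟩ := exists_path_of_lt_star hlt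
          obtain ⟨r, hr0, hrend, hrw⟩ :=
            exists_concat A p (fun t => x (k + t)) n (m - k)
              (show p n = (fun t => x (k + t)) 0 from hpn)
          have hr0' : r 0 = i := hr0.trans hp0
          have hrend' : r (n + (m - k)) = x m := by
            rw [hrend]; congr 1; omega
          have hrw' : ((u + π (x k) + ε + (Wb m - Wb k) : ℝ) : EReal)
              < pathWeight A r (n + (m - k)) := by
            rw [hrw, hseg k (m - k), show k + (m - k) = m by omega]
            calc ((u + π (x k) + ε + (Wb m - Wb k) : ℝ) : EReal)
                = ((u + π (x k) + ε : ℝ) : EReal) + ((Wb m - Wb k : ℝ) : EReal) := by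
                  rw [← EReal.coe_add]
              _ < _ := EReal.add_lt_add_right_coe hpw _
          have hstar2 : ((u + π (x k) + ε + (Wb m - Wb k) : ℝ) : EReal) ≤ star A i (x m) :=
            le_of_lt (lt_of_lt_of_le hrw' (pathWeight_le_star A hr0' hrend'))
          have hK2 : ((u + π (x k) + ε + (Wb m - Wb k) - π (x m) : ℝ) : EReal)
              ≤ K A π i (x m) := by
            rw [hKrw]
            have h3 := ereal_sub_le_sub_right hstar2 (π (x m))
            rwa [← EReal.coe_sub] at h3
          refine le_trans ?_ hK2
          have hπm : π (x m) ≤ π (x k) + (Wb m - Wb k) + ε := by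
            have h4 := hN k m hk (le_trans hk hkm)
            have h5 : Wb k - π (x k) - (Wb m - π (x m)) ≤ ε := h4
            linarith
          exact EReal.coe_le_coe_iff.mpr (by linarith)
      rw [hKrw, hse, ← EReal.coe_sub]
      calc ((s - π (x k) : ℝ) : EReal)
          = ((s - π (x k) - ε : ℝ) : EReal) + (ε : EReal) := by
            rw [← EReal.coe_add]; congr 1; ring
        _ ≤ K A π i (x m) + (ε : EReal) := add_le_add_left key _
  -- pointwise convergence of the Martin kernels along the geodesic
  set w : S → EReal := fun i => limsup (fun k => K A π i (x k)) atTop with hwdef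
  have hub : ∀ (i : S) (k : ℕ), K A π i (x k) ≤ ((-π i : ℝ) : EReal) :=
    fun i k => K_le_coe hπ i (x k)
  have htend : ∀ i, Tendsto (fun k => K A π i (x k)) atTop (𝓝 (w i)) := by
    intro i
    rw [tendsto_order]
    constructor
    · intro b hb
      obtain ⟨u, hbu, huL⟩ := EReal.exists_between_coe_real hb
      obtain ⟨u', huu', hu'L⟩ := EReal.exists_between_coe_real huL
      have hε : 0 < u' - u := by
        have := EReal.coe_lt_coe_iff.mp huu'
        linarith
      obtain ⟨N, hN⟩ := hE (u' - u) hε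
      have hfreq : ∃ᶠ k in atTop, ((u' : ℝ) : EReal) < K A π i (x k) :=
        frequently_lt_of_lt_limsup (by isBoundedDefault) hu'L
      obtain ⟨l, hl, hlN⟩ := (hfreq.and_eventually (eventually_ge_atTop N)).exists
      filter_upwards [eventually_ge_atTop l] with k hk
      have h1 := hN i l k hlN hk
      have h2 : ((u' : ℝ) : EReal) < K A π i (x k) + ((u' - u : ℝ) : EReal) :=
        lt_of_lt_of_le hl h1
      have h3 : ((u' - (u' - u) : ℝ) : EReal) < K A π i (x k) :=
        ereal_coe_sub_lt_of_lt_add h2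
      calc b < ((u : ℝ) : EReal) := hbu
        _ = ((u' - (u' - u) : ℝ) : EReal) := by congr 1; ring
        _ < _ := h3
    · intro b hb
      exact eventually_lt_of_limsup_lt hb
  have htendcols : Tendsto (fun k => fun i => K A π i (x k)) atTop (𝓝 w) := by
    rw [tendsto_pi_nhds]
    exact fun i => htend i
  have hwmartin : w ∈ martin A π :=
    mem_closure_of_tendsto htendcols (Eventually.of_forall fun k => ⟨x k, rfl⟩)
  have hwle : ∀ j, w j ≤ ((-π j : ℝ) : EReal) :=
    fun j => le_of_tendsto (htend j) (Eventually.of_forall fun k => hub j k)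
  -- lower bound for w along the geodesic
  have hFact1 : ∀ ε : ℝ, 0 < ε → ∃ N, ∀ m, N ≤ m →
      ((-π (x m) - ε : ℝ) : EReal) ≤ w (x m) := by
    intro ε hε
    obtain ⟨N, hN⟩ := hCauchy ε hε
    refine ⟨N, fun m hm => ?_⟩
    refine ge_of_tendsto (htend (x m)) ?_
    filter_upwards [eventually_ge_atTop m] with t ht
    have hsegle : ((Wb t - Wb m : ℝ) : EReal) ≤ star A (x m) (x t) := by
      have h2 : pathWeight A (fun s => x (m + s)) (t - m) ≤ star A (x m) (x t) :=
        pathWeight_le_star A rfl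
          (by show x (m + (t - m)) = x t; rw [Nat.add_sub_cancel' ht])
      rw [hseg m (t - m), Nat.add_sub_cancel' ht] at h2
      exact h2
    have hK : ((Wb t - Wb m - π (x t) : ℝ) : EReal) ≤ K A π (x m) (x t) := by
      rw [hKrw]
      have h3 := ereal_sub_le_sub_right hsegle (π (x t))
      rwa [← EReal.coe_sub] at h3
    refine le_trans ?_ hK
    have h4 : Wb m - π (x m) - (Wb t - π (x t)) ≤ ε := hN m t hm (le_trans hm ht)
    exact EReal.coe_le_coe_iff.mpr (by linarith)
  -- flat w ≤ w
  have hflatle : ∀ i, flat A π w i ≤ w i := by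
    intro i
    refine le_of_forall_gt_imp_ge_of_dense fun t ht => ?_
    refine iSup₂_le fun V hV => ?_
    have hopen : {f : S → EReal | f i < t} ∈ 𝓝 w :=
      (isOpen_lt (continuous_apply i) continuous_const).mem_nhds ht
    obtain ⟨f, hfmem, hfker⟩ := mem_closure_iff_nhds.mp hwmartin _ (inter_mem hV hopen)
    obtain ⟨j, hj⟩ := hfker
    have hj' : (fun i' => K A π i' j) = f := hj
    refine le_trans (iInf₂_le j ?_) ?_
    · rw [hj']; exact hfmem.1
    · refine le_trans (kflat_le_K i j) ?_
      have h2 : f i < t := hfmem.2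
      rw [← hj'] at h2
      exact le_of_lt h2
  -- H♭(w, w) ≤ 0
  have hupper : Hflat A π w w ≤ 0 := by
    have hsup : (⨆ (j : S) (_ : (fun i => K A π i j) ∈ (Set.univ : Set (S → EReal))),
        ((π j : EReal) + flat A π w j)) ≤ 0 := by
      refine iSup₂_le fun j _ => ?_
      have h1 : flat A π w j ≤ ((-π j : ℝ) : EReal) := le_trans (hflatle j) (hwle j)
      calc (π j : EReal) + flat A π w j
          ≤ (π j : EReal) + ((-π j : ℝ) : EReal) := add_le_add_right h1 _
        _ = 0 := by rw [← EReal.coe_add]; norm_num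
    exact iInf₂_le_of_le Set.univ Filter.univ_mem hsup
  -- H♭(w, w) ≥ 0
  have hlower : (0 : EReal) ≤ Hflat A π w w := by
    refine le_iInf₂ fun W hW => ?_
    refine le_of_forall_lt_imp_le_of_dense fun c hc => ?_
    induction c with
    | bot => exact bot_le
    | top => exact absurd hc not_top_lt
    | coe u =>
      have hu : u < 0 := by exact_mod_cast hc
      set ε : ℝ := -u / 3 with hεdef
      have hε : 0 < ε := by rw [hεdef]; linarith
      obtain ⟨N₁, hN₁⟩ := hCauchy ε hε
      obtain ⟨N₂, hN₂⟩ := hFact1 ε hε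
      have hev : ∀ᶠ k in atTop, (fun i => K A π i (x k)) ∈ W :=
        mem_map.mp (htendcols hW)
      obtain ⟨k, hkN, hkW⟩ := ((eventually_ge_atTop (max N₁ N₂)).and hev).exists
      have hk1 : N₁ ≤ k := le_trans (le_max_left _ _) hkN
      have hk2 : N₂ ≤ k := le_trans (le_max_right _ _) hkN
      set l := k + 1 with hldef
      have hbk_lb : ((-π (x k) - ε : ℝ) : EReal) ≤ w (x k) := hN₂ k hk2
      have hbl_lb : ((-π (x l) - ε : ℝ) : EReal) ≤ w (x l) := hN₂ l (by omega)
      have hwk_nt : w (x k) ≠ ⊤ := (lt_of_le_of_lt (hwle (x k)) (EReal.coe_lt_top _)).ne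
      have hwl_nt : w (x l) ≠ ⊤ := (lt_of_le_of_lt (hwle (x l)) (EReal.coe_lt_top _)).ne
      have hwk_nb : w (x k) ≠ ⊥ := fun h => by
        rw [h] at hbk_lb; exact absurd (le_bot_iff.mp hbk_lb) (EReal.coe_ne_bot _)
      have hwl_nb : w (x l) ≠ ⊥ := fun h => by
        rw [h] at hbl_lb; exact absurd (le_bot_iff.mp hbl_lb) (EReal.coe_ne_bot _)
      set bk : ℝ := (w (x k)).toReal with hbkdef
      set bl : ℝ := (w (x l)).toReal with hbldef
      have hbk : (bk : EReal) = w (x k) := EReal.coe_toReal hwk_nt hwk_nb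
      have hbl : (bl : EReal) = w (x l) := EReal.coe_toReal hwl_nt hwl_nb
      have hbkR : -π (x k) - ε ≤ bk := by
        rw [← hbk] at hbk_lb; exact_mod_cast hbk_lb
      have hblR : -π (x l) - ε ≤ bl := by
        rw [← hbl] at hbl_lb; exact_mod_cast hbl_lb
      set V : Set (S → EReal) :=
        {f | ((bk - ε : ℝ) : EReal) < f (x k)} ∩ {f | ((bl - ε : ℝ) : EReal) < f (x l)}
        with hVdef
      have hVopen : IsOpen V :=
        ((isOpen_lt continuous_const (continuous_apply (x k)))).inter
          (isOpen_lt continuous_const (continuous_apply (x l)))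
      have hVmem : V ∈ 𝓝 w := by
        refine hVopen.mem_nhds ⟨?_, ?_⟩
        · show ((bk - ε : ℝ) : EReal) < w (x k)
          rw [← hbk]; exact_mod_cast (by linarith : bk - ε < bk)
        · show ((bl - ε : ℝ) : EReal) < w (x l)
          rw [← hbl]; exact_mod_cast (by linarith : bl - ε < bl)
      -- the key lower bound on flat w at x k
      have hbound : ((-π (x k) - 3 * ε : ℝ) : EReal) ≤ flat A π w (x k) := by
        refine le_iSup₂_of_le V hVmem (le_iInf₂ fun j hj => ?_)
        have hj1 : ((bk - ε : ℝ) : EReal) < K A π (x k) j := hj.1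
        have hj2 : ((bl - ε : ℝ) : EReal) < K A π (x l) j := hj.2
        by_cases hjk : j = x k
        · rw [hjk] at hj2 ⊢
          -- the closed-path estimate
          have hsb : star A (x l) (x k) ≠ ⊥ := by
            intro h
            rw [hKrw, h, EReal.bot_sub] at hj2
            exact absurd hj2 (by simp)
          have hst : star A (x l) (x k) ≠ ⊤ := star_ne_top hπ _ _
          have hse : star A (x l) (x k) = ((star A (x l) (x k)).toReal : EReal) :=
            (EReal.coe_toReal hst hsb).symm
          set s : ℝ := (star A (x l) (x k)).toReal with hs
          have hj2' : bl - ε < s - π (x k) := by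
            rw [hKrw, hse, ← EReal.coe_sub] at hj2
            exact_mod_cast hj2
          have hlt : ((bl - ε + π (x k) : ℝ) : EReal) < star A (x l) (x k) := by
            rw [hse]
            exact_mod_cast (by linarith : bl - ε + π (x k) < s)
          obtain ⟨mq, q, hq0, hqn, hqw⟩ := exists_path_of_lt_star hlt
          obtain ⟨r, hr0, hrend, hrw⟩ :=
            exists_concat A (fun t => x (k + t)) q 1 mq
              (show (fun t => x (k + t)) 1 = q 0 from hq0.symm)
          have hr0' : r 0 = x k := hr0
          have hrend' : r (1 + mq) = x k := by rw [hrend, hqn]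
          have hplt : ((Wb l - Wb k + (bl - ε + π (x k)) : ℝ) : EReal) < plus A (x k) (x k) := by
            calc ((Wb l - Wb k + (bl - ε + π (x k)) : ℝ) : EReal)
                = ((Wb l - Wb k : ℝ) : EReal) + ((bl - ε + π (x k) : ℝ) : EReal) := by
                  rw [← EReal.coe_add]
              _ < ((Wb l - Wb k : ℝ) : EReal) + pathWeight A q mq :=
                  EReal.add_lt_add_left_coe hqw _
              _ = pathWeight A r (1 + mq) := by rw [hrw, hseg k 1]
              _ ≤ plus A (x k) (x k) := pathWeight_le_plus A (by omega) hr0' hrend'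
          have h5 : ((Wb l - Wb k + (bl - ε + π (x k)) - π (x k) : ℝ) : EReal)
              ≤ Kflat A π (x k) (x k) := by
            show _ ≤ plus A (x k) (x k) - (π (x k) : EReal)
            have h6 := ereal_sub_le_sub_right (le_of_lt hplt) (π (x k))
            rwa [← EReal.coe_sub] at h6
          refine le_trans ?_ h5
          have hD : Wb k - π (x k) - (Wb l - π (x l)) ≤ ε := hN₁ k l hk1 (by omega)
          exact EReal.coe_le_coe_iff.mpr (by linarith)
        · have hKeq : Kflat A π (x k) j = K A π (x k) j := by
            show plus A (x k) j - (π j : EReal) = star A (x k) j - (π j : EReal)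
            rw [le_antisymm (plus_le_star A _ _) (star_le_plus_of_ne fun h => hjk h.symm)]
          rw [hKeq]
          refine le_trans ?_ (le_of_lt hj1)
          exact EReal.coe_le_coe_iff.mpr (by linarith)
      refine le_iSup₂_of_le (x k) hkW ?_
      calc ((u : ℝ) : EReal)
          = ((π (x k) : ℝ) : EReal) + ((-π (x k) - 3 * ε : ℝ) : EReal) := by
            rw [← EReal.coe_add]; congr 1; rw [hεdef]; ring
        _ ≤ ((π (x k) : ℝ) : EReal) + flat A π w (x k) := add_le_add_right hbound _
  exact ⟨w, ⟨hwmartin, le_antisymm hupper hlower⟩, htendcols⟩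

end MaxPlus
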